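/- arXiv:1908.03802 — 2 statements merged into one kernel-verified Lean document; each statement's English description precedes it below -/
import Mathlib

section
/- (Existence of a stiffening constant, Lemma on matrices A, B.) Let A, B be symmetric real m×m matrices such that B is positive semidefinite and there is λ₀ > 0 with vᵀAv ≥ λ₀|v|² for every v in the null space of B. Then for every λ with 0 < λ < λ₀ there exists κ ≥ 0 such that vᵀ(A + κB)v ≥ λ|v|² for every v ∈ ℝᵐ (i.e. A + κB − λI is positive semidefinite). -/
open Matrix

/-- **Lemma (Existence of a stiffening constant).** Let `A, B` be symmetric real `m × m`
matrices with `B` positive semidefinite and `vᵀAv ≥ λ₀|v|²` on the null space of `B` for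
some `λ₀ > 0`. Then for every `0 < λ < λ₀` there is `κ ≥ 0` with
`vᵀ(A + κB)v ≥ λ|v|²` for all `v`. -/
theorem stiffening_constant (m : ℕ) (A B : Matrix (Fin m) (Fin m) ℝ)
    (hA : A.IsSymm) (hB : B.IsSymm) (hBpsd : B.PosSemidef)
    (lam₀ : ℝ) (hlam₀ : 0 < lam₀)
    (hnull : ∀ v : Fin m → ℝ, B.mulVec v = 0 → lam₀ * (v ⬝ᵥ v) ≤ v ⬝ᵥ A.mulVec v) :
    ∀ lam : ℝ, 0 < lam → lam < lam₀ →
      ∃ κ : ℝ, 0 ≤ κ ∧ ∀ v : Fin m → ℝ, lam * (v ⬝ᵥ v) ≤ v ⬝ᵥ (A + κ • B).mulVec v := by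
  intro lam hlam hlt
  -- quadratic forms
  set qA : (Fin m → ℝ) → ℝ := fun v => v ⬝ᵥ A.mulVec v with hqA
  set qB : (Fin m → ℝ) → ℝ := fun v => v ⬝ᵥ B.mulVec v with hqB
  have hexpand : ∀ (c : ℝ) (v : Fin m → ℝ),
      v ⬝ᵥ (A + c • B).mulVec v = qA v + c * qB v := by
    intro c v
    simp [qA, qB, add_mulVec, smul_mulVec, dotProduct_add, dotProduct_smul,
      smul_eq_mul]
  have hqBnonneg : ∀ v, 0 ≤ qB v := fun v => hBpsd.dotProduct_mulVec_nonneg v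
  -- continuity
  have hcont : ∀ M : Matrix (Fin m) (Fin m) ℝ, Continuous fun v : Fin m → ℝ => v ⬝ᵥ M.mulVec v := by
    intro M
    simp only [mulVec, dotProduct]
    fun_prop
  -- the unit sphere
  set K : Set (Fin m → ℝ) := {v | v ⬝ᵥ v = 1} with hK
  have hKcompact : IsCompact K := by
    have hclosed : IsClosed K := isClosed_eq (hcont 1 |>.congr (by simp)) continuous_const
    have hbdd : Bornology.IsBounded K := by
      rw [Metric.isBounded_iff_subset_closedBall 0]
      refine ⟨1, fun v hv => ?_⟩
      simp only [Metric.mem_closedBall, dist_zero_right]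
      rw [pi_norm_le_iff_of_nonneg zero_le_one]
      intro i
      have h1 : (v i)^2 ≤ 1 := by
        have := hv
        simp only [K, Set.mem_setOf_eq, dotProduct] at this
        calc (v i)^2 = v i * v i := sq (v i)
        _ ≤ ∑ j, v j * v j := Finset.single_le_sum (fun j _ => mul_self_nonneg (v j)) (Finset.mem_univ i)
        _ = 1 := this
      calc ‖v i‖ = |v i| := rfl
      _ ≤ 1 := abs_le_one_iff_mul_self_le_one.mpr (by nlinarith)
    exact Metric.isCompact_of_isClosed_isBounded hclosed hbdd
  -- open sets indexed by ℕ
  set U : ℕ → Set (Fin m → ℝ) := fun n => {v | lam < qA v + (n : ℝ) * qB v} with hU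
  have hUopen : ∀ n, IsOpen (U n) := by
    intro n
    have : Continuous fun v => qA v + (n : ℝ) * qB v :=
      ((hcont A).add (continuous_const.mul (hcont B)))
    exact isOpen_lt continuous_const this
  have hcover : K ⊆ ⋃ n, U n := by
    intro v hv
    have hv1 : v ⬝ᵥ v = 1 := hv
    by_cases hBv : B.mulVec v = 0
    · refine Set.mem_iUnion.mpr ⟨0, ?_⟩
      have h1 : lam₀ * (v ⬝ᵥ v) ≤ qA v := hnull v hBv
      have h2 : qB v = 0 := by simp [qB, hBv]
      simp only [U, Set.mem_setOf_eq, Nat.cast_zero, zero_mul, add_zero]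
      rw [hv1, mul_one] at h1
      linarith
    · have hqBpos : 0 < qB v := by
        rcases lt_or_eq_of_le (hqBnonneg v) with h | h
        · exact h
        · exfalso
          apply hBv
          have := (hBpsd.dotProduct_mulVec_zero_iff v).mp
          simp only [star_trivial] at this
          exact this h.symm
      obtain ⟨n, hn⟩ := exists_nat_gt ((lam - qA v) / qB v)
      refine Set.mem_iUnion.mpr ⟨n, ?_⟩
      simp only [U, Set.mem_setOf_eq]
      have := (div_lt_iff₀ hqBpos).mp hn
      linarith
  obtain ⟨t, ht⟩ := hKcompact.elim_finite_subcover U hUopen hcover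
  set N : ℕ := t.sup id with hN
  have hKU : ∀ v ∈ K, lam < qA v + (N : ℝ) * qB v := by
    intro v hv
    obtain ⟨n, hnt, hvn⟩ := Set.mem_iUnion₂.mp (ht hv)
    have hnN : (n : ℝ) ≤ (N : ℝ) := by
      exact_mod_cast Finset.le_sup (f := id) hnt
    have : lam < qA v + (n : ℝ) * qB v := hvn
    nlinarith [hqBnonneg v]
  refine ⟨(N : ℝ), Nat.cast_nonneg N, fun v => ?_⟩
  rw [hexpand]
  by_cases hv0 : v = 0
  · simp [hv0, qA, qB]
  · have hvv : 0 < v ⬝ᵥ v := by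
      have h1 : 0 ≤ v ⬝ᵥ v := by
        simp only [dotProduct]
        exact Finset.sum_nonneg fun i _ => mul_self_nonneg (v i)
      rcases lt_or_eq_of_le h1 with h | h
      · exact h
      · exfalso; apply hv0
        funext i
        show v i = 0
        have : ∑ j, v j * v j = 0 := by simpa [dotProduct] using h.symm
        have := (Finset.sum_eq_zero_iff_of_nonneg (fun j _ => mul_self_nonneg (v j))).mp this i (Finset.mem_univ i)
        nlinarith [this]
    set r : ℝ := Real.sqrt (v ⬝ᵥ v) with hr
    have hrpos : 0 < r := Real.sqrt_pos.mpr hvv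
    have hr2 : r ^ 2 = v ⬝ᵥ v := Real.sq_sqrt hvv.le
    set w : Fin m → ℝ := r⁻¹ • v with hw
    have hscaleA : ∀ M : Matrix (Fin m) (Fin m) ℝ, w ⬝ᵥ M.mulVec w = r⁻¹^2 * (v ⬝ᵥ M.mulVec v) := by
      intro M
      simp [w, Matrix.mulVec_smul, smul_dotProduct, dotProduct_smul, smul_eq_mul, sq]
      ring
    have hwK : w ∈ K := by
      have : w ⬝ᵥ w = r⁻¹^2 * (v ⬝ᵥ v) := by
        simp [w, smul_dotProduct, dotProduct_smul, smul_eq_mul, sq]; ring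
      simp only [K, Set.mem_setOf_eq, this, ← hr2]
      field_simp
    have := hKU w hwK
    have hA' : qA w = r⁻¹^2 * qA v := hscaleA A
    have hB' : qB w = r⁻¹^2 * qB v := hscaleA B
    rw [hA', hB'] at this
    have hrne : r ≠ 0 := hrpos.ne'
    have hr2pos : 0 < r^2 := by positivity
    have h2 : r⁻¹^2 = (r^2)⁻¹ := by rw [inv_pow]
    rw [h2] at this
    have hinv : (r^2)⁻¹ * r^2 = 1 := inv_mul_cancel₀ hr2pos.ne'
    have hmul := mul_lt_mul_of_pos_right this hr2pos
    rw [← hr2]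
    nlinarith [hmul, hinv]
end

section
/- (Ratio bound, content of Lemma 6.2(2).) Let κ > 0, λ > 0 and μ₀ ≤ λ/2 be reals. Then for all reals x ≥ 0 and μ with μ ≥ μ₀ and 2κx² + μ ≥ λ, one has κx/(2κx² + μ) ≤ (1/√2)·√κ·√(λ − μ₀)/λ. In particular, in the framework setup, every unit vector v ∈ 𝒞 satisfies κ|R(p)v|/(2κ|R(p)v|² + Ω_ω(v)) ≤ (1/√2)·√κ·√(λ − μ₀)/λ. -/
noncomputable section
open scoped BigOperators InnerProductSpace Classical

/-- Configuration space of `n` points in `ℝ^d`, with the Euclidean norm on `ℝ^{dn}`. -/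
abbrev Config (n d : ℕ) := PiLp 2 (fun _ : Fin n => EuclideanSpace ℝ (Fin d))

/-- The rigidity operator `R(q)` applied to `u`: the `k`-th entry, for edge `k = (i,j)`,
is `⟨q_i - q_j, u_i - u_j⟩`. -/
def rig {n d m : ℕ} (E : Fin m → Fin n × Fin n) (q u : Config n d) :
    EuclideanSpace ℝ (Fin m) :=
  WithLp.toLp 2 (fun k => ⟪q (E k).1 - q (E k).2, u (E k).1 - u (E k).2⟫_ℝ)

/-- The stress form `Ω_ω(v) = Σ_{(i,j)∈E} ω_{ij} |v_i - v_j|²`. -/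
def stressForm {n d m : ℕ} (E : Fin m → Fin n × Fin n)
    (ω : EuclideanSpace ℝ (Fin m)) (v : Config n d) : ℝ :=
  ∑ k, ω k * ‖v (E k).1 - v (E k).2‖ ^ 2

/-- The vector `ωᵀ R(p) ∈ ℝ^{dn}` whose `l`-th block is `Σ_{j : (l,j)∈E} ω_{lj} (p_l - p_j)`. -/
def stressGrad {n d m : ℕ} (E : Fin m → Fin n × Fin n)
    (ω : EuclideanSpace ℝ (Fin m)) (p : Config n d) : Config n d :=
  WithLp.toLp 2 (fun l => ∑ k, (((if (E k).1 = l then (1:ℝ) else 0) - (if (E k).2 = l then (1:ℝ) else 0)) * ω k) •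
    (p (E k).1 - p (E k).2))

/-- The vector `e(q) ∈ ℝ^m` of squared edge lengths. -/
def esq {n d m : ℕ} (E : Fin m → Fin n × Fin n) (q : Config n d) :
    EuclideanSpace ℝ (Fin m) :=
  WithLp.toLp 2 (fun k => ‖q (E k).1 - q (E k).2‖ ^ 2)

/-- `z` bounds the number of edges incident to each vertex (`z ≥` the maximum adjacency). -/
def degBound {n m : ℕ} (E : Fin m → Fin n × Fin n) (z : ℝ) : Prop :=
  ∀ l : Fin n, ((Finset.univ.filter (fun k => (E k).1 = l ∨ (E k).2 = l)).card : ℝ) ≤ z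

/-- **Lemma 6.2(2) (Ratio bound).** For `κ > 0`, `λ > 0`, `μ₀ ≤ λ/2`: whenever `x ≥ 0`,
`μ ≥ μ₀` and `2κx² + μ ≥ λ`, one has `κx/(2κx² + μ) ≤ (1/√2)·√κ·√(λ−μ₀)/λ`. In particular,
in the framework setup every unit `v ∈ 𝒞` satisfies
`κ|R(p)v|/(2κ|R(p)v|² + Ω_ω(v)) ≤ (1/√2)·√κ·√(λ−μ₀)/λ`. -/
theorem ratio_bound {n d m : ℕ} (E : Fin m → Fin n × Fin n) (hm : 0 < m)
    (hE : ∀ k, (E k).1 ≠ (E k).2)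
    (p : Config n d) (C : Submodule ℝ (Config n d))
    (κ lam μ₀ : ℝ) (ω : EuclideanSpace ℝ (Fin m))
    (hκ : 0 < κ) (hlam : 0 < lam) (hμ₀ : μ₀ ≤ lam / 2)
    (hlower : ∀ v ∈ C, ‖v‖ = 1 → lam ≤ 2 * κ * ‖rig E p v‖ ^ 2 + stressForm E ω v)
    (hμlower : ∀ v ∈ C, ‖v‖ = 1 → μ₀ ≤ stressForm E ω v) :
    (∀ x μ : ℝ, 0 ≤ x → μ₀ ≤ μ → lam ≤ 2 * κ * x ^ 2 + μ →
      κ * x / (2 * κ * x ^ 2 + μ) ≤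
        (1 / Real.sqrt 2) * Real.sqrt κ * Real.sqrt (lam - μ₀) / lam) ∧
    (∀ v ∈ C, ‖v‖ = 1 →
      κ * ‖rig E p v‖ / (2 * κ * ‖rig E p v‖ ^ 2 + stressForm E ω v) ≤
        (1 / Real.sqrt 2) * Real.sqrt κ * Real.sqrt (lam - μ₀) / lam) := by
  have key : ∀ x μ : ℝ, 0 ≤ x → μ₀ ≤ μ → lam ≤ 2 * κ * x ^ 2 + μ →
      κ * x / (2 * κ * x ^ 2 + μ) ≤
        (1 / Real.sqrt 2) * Real.sqrt κ * Real.sqrt (lam - μ₀) / lam := by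
    intro x μ hx hμ hS
    set c : ℝ := Real.sqrt κ * Real.sqrt (lam - μ₀) / Real.sqrt 2 with hc
    have h2pos : (0:ℝ) < Real.sqrt 2 := Real.sqrt_pos.mpr (by norm_num)
    have hlm : (0:ℝ) ≤ lam - μ₀ := by linarith
    have hc0 : 0 ≤ c := by positivity
    have hc2 : c ^ 2 = κ * (lam - μ₀) / 2 := by
      rw [hc, div_pow, mul_pow, Real.sq_sqrt hκ.le, Real.sq_sqrt hlm, Real.sq_sqrt (by norm_num)]
    have hSpos : 0 < 2 * κ * x ^ 2 + μ := lt_of_lt_of_le hlam hS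
    have hrhs : (1 / Real.sqrt 2) * Real.sqrt κ * Real.sqrt (lam - μ₀) / lam = c / lam := by
      rw [hc]; ring
    rw [hrhs, div_le_div_iff₀ hSpos hlam]
    rcases le_or_gt (2 * κ * x ^ 2) (lam - μ₀) with h | h
    · -- κx ≤ c, S ≥ lam
      have hkx : κ * x ≤ c := by
        nlinarith [sq_nonneg (κ * x - c), sq_nonneg (κ * x + c), mul_nonneg hκ.le hx]
      nlinarith [mul_nonneg hc0 (by linarith : (0:ℝ) ≤ 2 * κ * x ^ 2 + μ - lam)]
    · -- κx ≥ c
      have hkx : c ≤ κ * x := by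
        nlinarith [sq_nonneg (κ * x - c), sq_nonneg (κ * x + c), mul_nonneg hκ.le hx]
      have hfac : 0 ≤ (κ * x - c) * (2 * c * (κ * x) + 2 * c ^ 2 - lam * κ) := by
        apply mul_nonneg (by linarith)
        nlinarith [mul_nonneg hc0 (by linarith : (0:ℝ) ≤ κ * x - c)]
      nlinarith [mul_nonneg hc0 (by linarith : (0:ℝ) ≤ μ - μ₀)]
  refine ⟨key, fun v hv hv1 => key _ _ (norm_nonneg _) (hμlower v hv hv1) (hlower v hv hv1)⟩
end
end
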